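/- Let G be a finite simple graph on n vertices with graph Laplacian L, let 0<α<1 and t≥0. Then the subdiffusive distance 𝒟_{α,t}(v,w) is real and nonnegative for all vertices v,w, and there exists an embedding x: V → ℝⁿ such that 𝒟_{α,t}(v,w) = ‖x(v) − x(w)‖₂² for all v,w ∈ V. -/

import Mathlib

open Matrix

/-- The Mittag-Leffler matrix function `E_α(M) = ∑_{k=0}^∞ M^k/Γ(αk+1)`, defined entrywise. -/
noncomputable def mittagLefflerMatrix {n : ℕ} (α : ℝ) (M : Matrix (Fin n) (Fin n) ℝ) :
    Matrix (Fin n) (Fin n) ℝ :=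
  Matrix.of fun i j => ∑' k : ℕ, ((M ^ k) i j) / Real.Gamma (α * k + 1)

/-- The subdiffusive distance
`𝒟_{α,t}(v,w) = (E_α(−t^αL))_{vv} + (E_α(−t^αL))_{ww} − 2(E_α(−t^αL))_{vw}`. -/
noncomputable def subdiffDist {n : ℕ} (G : SimpleGraph (Fin n)) [DecidableRel G.Adj]
    (α t : ℝ) (v w : Fin n) : ℝ :=
  mittagLefflerMatrix α (-(t ^ α) • G.lapMatrix ℝ) v v +
    mittagLefflerMatrix α (-(t ^ α) • G.lapMatrix ℝ) w w -
    2 * mittagLefflerMatrix α (-(t ^ α) • G.lapMatrix ℝ) v w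


/-! ### Auxiliary development
We prove that the scalar Mittag-Leffler function `E_α(-x)` is nonnegative for `x ≥ 0`,
`0 < α < 1`, by expressing it as a limit of nonnegative discrete (Grünwald–Letnikov-type)
approximants, and then diagonalize the Laplacian to obtain the Euclidean embedding. -/

open Finset Filter Topology

/-- Generalized binomial-type product `Q n β = ∏_{i=1}^n (β+i)/i = C(β+n, n)`. -/
noncomputable def mlQ (n : ℕ) (β : ℝ) : ℝ := ∏ i ∈ Finset.range n, (β + (i + 1)) / (i + 1)

lemma mlQ_zero (β : ℝ) : mlQ 0 β = 1 := by simp [mlQ]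

lemma mlQ_succ (n : ℕ) (β : ℝ) :
    mlQ (n + 1) β = mlQ n β * ((β + (n + 1)) / (n + 1)) := by
  simp only [mlQ, Finset.prod_range_succ]

lemma mlQ_nonneg {n : ℕ} {β : ℝ} (h : -1 ≤ β) : 0 ≤ mlQ n β := by
  refine Finset.prod_nonneg fun i _ => div_nonneg ?_ (by positivity)
  have : (0:ℝ) ≤ (i:ℝ) := Nat.cast_nonneg i
  linarith

lemma mlQ_le {n : ℕ} {β B : ℝ} (h1 : -1 ≤ β) (h2 : β ≤ B) (hB : 0 ≤ B) :
    mlQ n β ≤ (1 + B) ^ n := by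
  calc mlQ n β ≤ ∏ _i ∈ Finset.range n, (1 + B) := by
        refine Finset.prod_le_prod (fun i _ => div_nonneg (by
          have : (0:ℝ) ≤ (i:ℝ) := Nat.cast_nonneg i
          linarith) (by positivity)) fun i _ => ?_
        rw [div_le_iff₀ (by positivity)]
        have hi : (0:ℝ) ≤ (i:ℝ) := Nat.cast_nonneg i
        nlinarith
    _ = (1 + B) ^ n := by rw [Finset.prod_const, Finset.card_range]

/-- `(β+n) * Q n (β-1) = β * Q n β`. -/
lemma mlQ_shift (n : ℕ) (β : ℝ) : (β + n) * mlQ n (β - 1) = β * mlQ n β := by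
  induction n with
  | zero => simp [mlQ_zero]
  | succ n ih =>
      rw [mlQ_succ, mlQ_succ]
      have hn1 : ((n:ℝ) + 1) ≠ 0 := by positivity
      push_cast
      field_simp
      linear_combination ((β : ℝ) + n + 1) * ih

/-- Pascal's rule for `mlQ`. -/
lemma mlQ_pascal (n : ℕ) (β : ℝ) :
    mlQ (n + 1) β = mlQ (n + 1) (β - 1) + mlQ n β := by
  have h := mlQ_shift n β
  rw [mlQ_succ, mlQ_succ]
  have hn1 : ((n:ℝ) + 1) ≠ 0 := by positivity
  field_simp
  linear_combination (-1 : ℝ) * h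

/-- Hockey stick: `∑_{k≤n} Q k r = Q n (r+1)`. -/
lemma mlQ_hockey (n : ℕ) (r : ℝ) :
    ∑ k ∈ Finset.range (n + 1), mlQ k r = mlQ n (r + 1) := by
  induction n with
  | zero => simp [mlQ_zero]
  | succ n ih =>
      rw [Finset.sum_range_succ, ih, mlQ_pascal n (r + 1)]
      simp [add_comm]

lemma mlQ_at_nat_zero (n : ℕ) : mlQ n 0 = 1 := by
  refine Finset.prod_eq_one fun i _ => ?_
  rw [zero_add, div_self]
  positivity

lemma mlQ_vandermonde_nat (m : ℕ) : ∀ (n : ℕ) (r : ℝ),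
    ∑ k ∈ Finset.range (n + 1), mlQ k r * mlQ (n - k) (m : ℝ) = mlQ n (r + m + 1) := by
  induction m with
  | zero =>
      intro n r
      simp only [Nat.cast_zero, mlQ_at_nat_zero, mul_one, add_zero]
      exact mlQ_hockey n r
  | succ m ihm =>
      intro n
      induction n with
      | zero => intro r; simp [mlQ_zero]
      | succ n ihn =>
          intro r
          push_cast at ihn ⊢
          have key : ∀ k ∈ Finset.range (n + 1),
              mlQ k r * mlQ (n + 1 - k) ((m : ℝ) + 1)
                = mlQ k r * mlQ (n + 1 - k) (m : ℝ) + mlQ k r * mlQ (n - k) ((m : ℝ) + 1) := by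
            intro k hk
            have hk' : k ≤ n := Nat.lt_succ_iff.mp (Finset.mem_range.mp hk)
            have h1 : n + 1 - k = (n - k) + 1 := by omega
            rw [h1, mlQ_pascal (n - k) ((m : ℝ) + 1)]
            ring_nf
          rw [Finset.sum_range_succ, Finset.sum_congr rfl key, Finset.sum_add_distrib]
          have e1 : ∑ k ∈ Finset.range (n + 1), mlQ k r * mlQ (n + 1 - k) (m : ℝ)
              = mlQ (n + 1) (r + m + 1) - mlQ (n + 1) r * mlQ 0 (m : ℝ) := by
            have := ihm (n + 1) r
            rw [Finset.sum_range_succ] at this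
            simp only [Nat.sub_self] at this
            linarith
          rw [e1, ihn r, mlQ_zero]
          have hp := mlQ_pascal n (r + (m:ℝ) + 2)
          rw [show r + (m:ℝ) + 2 - 1 = r + (m:ℝ) + 1 by ring] at hp
          simp only [Nat.sub_self, mlQ_zero, mul_one]
          ring_nf
          ring_nf at hp
          linarith

noncomputable def mlQp (n : ℕ) : Polynomial ℝ :=
  ∏ i ∈ Finset.range n, Polynomial.C (((i : ℝ) + 1)⁻¹) * (Polynomial.X + Polynomial.C ((i : ℝ) + 1))

lemma mlQp_eval (n : ℕ) (β : ℝ) : (mlQp n).eval β = mlQ n β := by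
  simp [mlQp, mlQ, Polynomial.eval_prod, div_eq_inv_mul]

/-- Chu-Vandermonde identity for real generalized binomial products. -/
lemma mlQ_vandermonde (n : ℕ) (r s : ℝ) :
    ∑ k ∈ Finset.range (n + 1), mlQ k r * mlQ (n - k) s = mlQ n (r + s + 1) := by
  have hpoly : (∑ k ∈ Finset.range (n + 1), Polynomial.C (mlQ k r) * mlQp (n - k))
      = (mlQp n).comp (Polynomial.X + Polynomial.C (r + 1)) := by
    apply Polynomial.eq_of_infinite_eval_eq
    apply Set.Infinite.mono (s := Set.range ((↑) : ℕ → ℝ))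
    · intro x hx
      obtain ⟨m, rfl⟩ := hx
      simp only [Set.mem_setOf_eq, Polynomial.eval_finset_sum, Polynomial.eval_mul,
        Polynomial.eval_C, Polynomial.eval_comp, Polynomial.eval_add, Polynomial.eval_X,
        mlQp_eval]
      rw [mlQ_vandermonde_nat m n r]
      ring_nf
    · exact Set.infinite_range_of_injective Nat.cast_injective
  have := congrArg (Polynomial.eval s) hpoly
  simpa only [Polynomial.eval_finset_sum, Polynomial.eval_mul, Polynomial.eval_C,
    Polynomial.eval_comp, Polynomial.eval_add, Polynomial.eval_X, mlQp_eval,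
    show s + (r + 1) = r + s + 1 by ring] using this

section series
variable {α : ℝ} (hα0 : 0 < α) (hα1 : α < 1)

lemma ml_summable_aux {c : ℝ} (hc0 : 0 ≤ c) (hc1 : c < 1) (n : ℕ) :
    Summable (fun j : ℕ => c ^ j * (1 + (j : ℝ)) ^ n) := by
  have h1 : Summable (fun j : ℕ => (2:ℝ) ^ n * ((j:ℝ) ^ n * c ^ j) + (2:ℝ) ^ n * c ^ j) := by
    refine Summable.add (Summable.mul_left _ ?_) (Summable.mul_left _ ?_)
    · exact summable_pow_mul_geometric_of_norm_lt_one n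
        (by rwa [Real.norm_eq_abs, abs_of_nonneg hc0])
    · exact summable_geometric_of_lt_one hc0 hc1
  refine h1.of_nonneg_of_le (fun j => by positivity) fun j => ?_
  have hj : (0:ℝ) ≤ (j:ℝ) := Nat.cast_nonneg j
  have key : (1 + (j:ℝ)) ^ n ≤ (2:ℝ) ^ n * (j:ℝ) ^ n + (2:ℝ) ^ n := by
    rcases Nat.eq_zero_or_pos j with rfl | hj1
    · push_cast
      rw [add_zero, one_pow]
      have h2 : (1:ℝ) ≤ 2 ^ n := one_le_pow₀ (by norm_num)
      have h3 : (0:ℝ) ≤ (2:ℝ) ^ n * (0:ℝ) ^ n :=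
        mul_nonneg (by positivity) (pow_nonneg le_rfl n)
      linarith
    · have h2 : (1 + (j:ℝ)) ≤ 2 * (j:ℝ) := by
        have : (1:ℝ) ≤ (j:ℝ) := by exact_mod_cast hj1
        linarith
      calc (1 + (j:ℝ)) ^ n ≤ (2 * (j:ℝ)) ^ n := pow_le_pow_left₀ (by linarith) h2 n
        _ = (2:ℝ) ^ n * (j:ℝ) ^ n := by rw [mul_pow]
        _ ≤ _ := by linarith [(by positivity : (0:ℝ) ≤ (2:ℝ) ^ n)]
  calc c ^ j * (1 + (j:ℝ)) ^ n
      ≤ c ^ j * ((2:ℝ) ^ n * (j:ℝ) ^ n + (2:ℝ) ^ n) :=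
        mul_le_mul_of_nonneg_left key (by positivity)
    _ = (2:ℝ) ^ n * ((j:ℝ) ^ n * c ^ j) + (2:ℝ) ^ n * c ^ j := by ring

include hα0 hα1 in
lemma ml_summable_shift {c : ℝ} (hc0 : 0 ≤ c) (hc1 : c < 1) (n : ℕ) {γ : ℝ}
    (hγ1 : -1 ≤ γ) (hγ2 : γ ≤ 0) :
    Summable (fun j : ℕ => (-c) ^ j * mlQ n (α * j + γ)) := by
  refine (ml_summable_aux hc0 hc1 n).of_norm_bounded fun j => ?_
  have hj : (0:ℝ) ≤ (j:ℝ) := Nat.cast_nonneg j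
  have hb1 : -1 ≤ α * j + γ := by nlinarith
  have hQ : 0 ≤ mlQ n (α * j + γ) := mlQ_nonneg hb1
  rw [norm_mul, norm_pow, norm_neg, Real.norm_eq_abs, Real.norm_eq_abs,
    abs_of_nonneg hc0, abs_of_nonneg hQ]
  refine mul_le_mul_of_nonneg_left ?_ (by positivity)
  exact mlQ_le hb1 (by nlinarith) hj

include hα1 in
lemma mlQ_neg_arg (hα0 : 0 < α) (k : ℕ) : mlQ (k + 1) (-α - 1) ≤ 0 := by
  rw [mlQ, Finset.prod_range_succ']
  have h1 : (0:ℝ) ≤ ∏ i ∈ Finset.range k, (-α - 1 + (((i:ℝ) + 1) + 1)) / (((i:ℝ) + 1) + 1) := by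
    refine Finset.prod_nonneg fun i _ => div_nonneg ?_ (by positivity)
    have : (0:ℝ) ≤ (i:ℝ) := Nat.cast_nonneg i
    linarith
  have h2 : (-α - 1 + ((0:ℝ) + 1)) / ((0:ℝ) + 1) ≤ 0 := by
    rw [zero_add, div_one]
    linarith
  push_cast at h1 h2 ⊢
  exact mul_nonpos_of_nonneg_of_nonpos h1 h2

include hα0 hα1 in
/-- Nonnegativity of the discrete approximants, via the Grünwald–Letnikov-type recurrence. -/
lemma mlW_nonneg {c : ℝ} (hc0 : 0 ≤ c) (hc1 : c < 1) :
    ∀ n : ℕ, 0 ≤ ∑' j : ℕ, (-c) ^ j * mlQ n (α * j) := by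
  intro n
  induction n using Nat.strong_induction_on with
  | _ n ih =>
    have hs : ∀ m : ℕ, Summable (fun j : ℕ => (-c) ^ j * mlQ m (α * j)) := by
      intro m
      exact (ml_summable_shift hα0 hα1 hc0 hc1 m (by norm_num) (le_refl 0)).congr
        (fun j => by rw [add_zero])
    have hs' : Summable (fun j : ℕ => (-c) ^ j * mlQ n (α * j + -α)) :=
      ml_summable_shift hα0 hα1 hc0 hc1 n (by linarith) (by linarith)
    set W : ℕ → ℝ := fun m => ∑' j : ℕ, (-c) ^ j * mlQ m (α * j) with hW
    have step1 : ∑ k ∈ Finset.range (n + 1), mlQ k (-α - 1) * W (n - k)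
        = ∑' j : ℕ, (-c) ^ j * mlQ n (α * j + -α) := by
      calc ∑ k ∈ Finset.range (n + 1), mlQ k (-α - 1) * W (n - k)
          = ∑ k ∈ Finset.range (n + 1),
              ∑' j : ℕ, mlQ k (-α - 1) * ((-c) ^ j * mlQ (n - k) (α * j)) :=
            Finset.sum_congr rfl fun k _ => tsum_mul_left.symm
        _ = ∑' j : ℕ, ∑ k ∈ Finset.range (n + 1),
              mlQ k (-α - 1) * ((-c) ^ j * mlQ (n - k) (α * j)) :=
            (Summable.tsum_finsetSum (fun k _ => (hs (n - k)).mul_left _)).symm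
        _ = ∑' j : ℕ, (-c) ^ j * mlQ n (α * j + -α) := by
            refine tsum_congr fun j => ?_
            have hv := mlQ_vandermonde n (-α - 1) (α * j)
            calc ∑ k ∈ Finset.range (n + 1), mlQ k (-α - 1) * ((-c) ^ j * mlQ (n - k) (α * j))
                = (-c) ^ j * ∑ k ∈ Finset.range (n + 1), mlQ k (-α - 1) * mlQ (n - k) (α * j) := by
                  rw [Finset.mul_sum]
                  exact Finset.sum_congr rfl fun k _ => by ring
              _ = (-c) ^ j * mlQ n (α * j + -α) := by
                  rw [hv, show -α - 1 + α * (j:ℝ) + 1 = α * j + -α by ring]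
    have step2 : ∑' j : ℕ, (-c) ^ j * mlQ n (α * j + -α)
        = mlQ n (-α) - c * W n := by
      rw [Summable.tsum_eq_zero_add hs']
      have htail : ∀ j : ℕ, (-c) ^ (j + 1) * mlQ n (α * ((j + 1 : ℕ):ℝ) + -α)
          = (-c) * ((-c) ^ j * mlQ n (α * j)) := by
        intro j
        rw [pow_succ, show (α * (((j:ℕ) + 1 : ℕ) : ℝ) + -α) = α * j by push_cast; ring]
        ring
      rw [tsum_congr htail, tsum_mul_left]
      norm_num
      ring
    have peel : ∑ k ∈ Finset.range (n + 1), mlQ k (-α - 1) * W (n - k)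
        = W n + ∑ k ∈ Finset.range n, mlQ (k + 1) (-α - 1) * W (n - (k + 1)) := by
      rw [Finset.sum_range_succ']
      simp only [mlQ_zero, one_mul, Nat.sub_zero]
      ring
    have key : W n + ∑ k ∈ Finset.range n, mlQ (k + 1) (-α - 1) * W (n - (k + 1))
        = mlQ n (-α) - c * W n := by rw [← peel, step1, step2]
    have hQn : 0 ≤ mlQ n (-α) := mlQ_nonneg (by linarith)
    have hSle : ∑ k ∈ Finset.range n, mlQ (k + 1) (-α - 1) * W (n - (k + 1)) ≤ 0 := by
      refine Finset.sum_nonpos fun k hk => ?_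
      have hklt : n - (k + 1) < n := by
        have := Finset.mem_range.mp hk
        omega
      exact mul_nonpos_of_nonpos_of_nonneg (mlQ_neg_arg hα1 hα0 k) (ih _ hklt)
    nlinarith [key, hQn, hSle]

end series

noncomputable def mlP (n : ℕ) (β : ℝ) : ℝ := mlQ n β / (n : ℝ) ^ β

lemma mlP_nonneg {n : ℕ} {β : ℝ} (h : 0 ≤ β) : 0 ≤ mlP n β :=
  div_nonneg (mlQ_nonneg (by linarith)) (Real.rpow_nonneg (Nat.cast_nonneg n) β)

lemma mlP_antitone_step {β : ℝ} (hβ : 0 ≤ β) {n : ℕ} (hn : 1 ≤ n) :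
    mlP (n + 1) β ≤ mlP n β := by
  have hn0 : (0:ℝ) < (n:ℝ) := by exact_mod_cast hn
  have hn1 : (0:ℝ) < (n:ℝ) + 1 := by linarith
  have hlog : 1 / ((n:ℝ) + 1) ≤ Real.log (((n:ℝ) + 1) / n) := by
    have h1 : Real.log ((n:ℝ) / (n + 1)) ≤ (n:ℝ) / (n + 1) - 1 :=
      Real.log_le_sub_one_of_pos (by positivity)
    have h2 : Real.log ((n:ℝ) / (n + 1)) = -Real.log (((n:ℝ) + 1) / n) := by
      rw [show (n:ℝ) / (n + 1) = (((n:ℝ) + 1) / n)⁻¹ by field_simp, Real.log_inv]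
    have h3 : (n:ℝ) / (n + 1) - 1 = -(1 / ((n:ℝ) + 1)) := by field_simp; ring
    rw [h2, h3] at h1
    linarith
  have key : (β + ((n:ℝ) + 1)) / ((n:ℝ) + 1) ≤ ((n:ℝ) + 1) ^ β / (n:ℝ) ^ β := by
    rw [← Real.div_rpow (by linarith) hn0.le,
      Real.rpow_def_of_pos (by positivity : (0:ℝ) < ((n:ℝ) + 1) / n)]
    calc (β + ((n:ℝ) + 1)) / ((n:ℝ) + 1) = β / ((n:ℝ) + 1) + 1 := by field_simp
      _ ≤ Real.exp (β / ((n:ℝ) + 1)) := Real.add_one_le_exp _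
      _ ≤ Real.exp (Real.log (((n:ℝ) + 1) / n) * β) := by
          rw [Real.exp_le_exp]
          calc β / ((n:ℝ) + 1) = (1 / ((n:ℝ) + 1)) * β := by ring
            _ ≤ Real.log (((n:ℝ) + 1) / n) * β := by
                exact mul_le_mul_of_nonneg_right hlog hβ
  have hQn : 0 ≤ mlQ n β := mlQ_nonneg (by linarith)
  have hp1 : (0:ℝ) < ((n:ℝ) + 1) ^ β := Real.rpow_pos_of_pos hn1 β
  have hp0 : (0:ℝ) < (n:ℝ) ^ β := Real.rpow_pos_of_pos hn0 β
  rw [mlP, mlP, mlQ_succ]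
  push_cast
  rw [div_le_div_iff₀ hp1 hp0]
  calc mlQ n β * ((β + ((n:ℝ) + 1)) / ((n:ℝ) + 1)) * (n:ℝ) ^ β
      ≤ mlQ n β * (((n:ℝ) + 1) ^ β / (n:ℝ) ^ β) * (n:ℝ) ^ β := by
        refine mul_le_mul_of_nonneg_right (mul_le_mul_of_nonneg_left key hQn) hp0.le
    _ = mlQ n β * ((n:ℝ) + 1) ^ β := by field_simp

lemma mlP_anti {β : ℝ} (hβ : 0 ≤ β) {m n : ℕ} (hm : 1 ≤ m) (hmn : m ≤ n) :
    mlP n β ≤ mlP m β := by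
  induction n, hmn using Nat.le_induction with
  | base => exact le_refl _
  | succ n hmn ih => exact (mlP_antitone_step hβ (le_trans hm hmn)).trans ih

lemma mlP_tendsto {β : ℝ} (hβ : 0 ≤ β) :
    Tendsto (fun n : ℕ => mlP n β) atTop (𝓝 (1 / Real.Gamma (β + 1))) := by
  rcases eq_or_lt_of_le hβ with rfl | hβ'
  · simp only [mlP, mlQ_at_nat_zero, Real.rpow_zero, div_one, zero_add, Real.Gamma_one]
    simpa using tendsto_const_nhds
  · have hΓ : Real.Gamma β ≠ 0 := (Real.Gamma_pos_of_pos hβ').ne'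
    have h1 : Tendsto (fun n : ℕ => (β * Real.GammaSeq β n)⁻¹) atTop
        (𝓝 ((β * Real.Gamma β)⁻¹)) := by
      exact ((Real.GammaSeq_tendsto_Gamma β).const_mul β).inv₀ (by positivity)
    have h2 : (β * Real.Gamma β)⁻¹ = 1 / Real.Gamma (β + 1) := by
      rw [Real.Gamma_add_one hβ'.ne', one_div]
    rw [← h2]
    refine h1.congr' ?_
    filter_upwards [eventually_ge_atTop 1] with n hn
    have hn0 : (0:ℝ) < (n:ℝ) := by exact_mod_cast hn
    have hfac : (0:ℝ) < ((Nat.factorial n : ℕ) : ℝ) := by exact_mod_cast Nat.factorial_pos n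
    have hprod : ∏ j ∈ Finset.range (n + 1), (β + (j:ℝ))
        = β * ∏ i ∈ Finset.range n, (β + ((i:ℝ) + 1)) := by
      rw [Finset.prod_range_succ']
      push_cast
      ring
    have hQ : mlQ n β = (∏ i ∈ Finset.range n, (β + ((i:ℝ) + 1))) / ((Nat.factorial n : ℕ) : ℝ) := by
      rw [mlQ, Finset.prod_div_distrib]
      congr 1
      rw [← Finset.prod_range_add_one_eq_factorial n]
      push_cast
      rfl
    have hpp : (0:ℝ) < ∏ i ∈ Finset.range n, (β + ((i:ℝ) + 1)) := by
      refine Finset.prod_pos fun i _ => ?_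
      have : (0:ℝ) ≤ (i:ℝ) := Nat.cast_nonneg i
      linarith
    have hrp : (0:ℝ) < (n:ℝ) ^ β := Real.rpow_pos_of_pos hn0 β
    rw [Real.GammaSeq, hprod, mlP, hQ]
    field_simp

lemma one_div_Gamma_le_mlP {β : ℝ} (hβ : 0 ≤ β) {n0 : ℕ} (hn0 : 1 ≤ n0) :
    1 / Real.Gamma (β + 1) ≤ mlP n0 β := by
  refine le_of_tendsto (mlP_tendsto hβ) ?_
  filter_upwards [eventually_ge_atTop n0] with n hn
  exact mlP_anti hβ hn0 hn

section scalar
variable {α : ℝ} (hα0 : 0 < α) (hα1 : α < 1)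

include hα0 in
lemma ml_exists_n0 (x : ℝ) : ∃ n0 : ℕ, 1 ≤ n0 ∧ x < (n0 : ℝ) ^ α := by
  have h : Tendsto (fun n : ℕ => ((n : ℝ)) ^ α) atTop atTop :=
    (tendsto_rpow_atTop hα0).comp tendsto_natCast_atTop_atTop
  obtain ⟨n0, hn0⟩ := ((h.eventually_gt_atTop x).and (eventually_ge_atTop 1)).exists
  exact ⟨n0, hn0.2, hn0.1⟩

include hα0 hα1 in
lemma ml_term_bound {x : ℝ} (hx : 0 ≤ x) {n0 : ℕ} (hn0 : 1 ≤ n0)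
    (hxn : x < (n0 : ℝ) ^ α) (j : ℕ) :
    x ^ j * mlP n0 (α * j) ≤ (x / (n0 : ℝ) ^ α) ^ j * (1 + (j : ℝ)) ^ n0 := by
  have hj : (0:ℝ) ≤ (j:ℝ) := Nat.cast_nonneg j
  have hc : (0:ℝ) < (n0 : ℝ) ^ α := lt_of_le_of_lt hx hxn
  have hn0' : (0:ℝ) < (n0:ℝ) := by exact_mod_cast hn0
  have hrw : ((n0 : ℝ)) ^ (α * (j:ℝ)) = ((n0 : ℝ) ^ α) ^ j := by
    rw [Real.rpow_mul hn0'.le, Real.rpow_natCast]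
  have hQle : mlQ n0 (α * j) ≤ (1 + (j:ℝ)) ^ n0 :=
    mlQ_le (by nlinarith) (by nlinarith) hj
  have hQ0 : 0 ≤ mlQ n0 (α * j) := mlQ_nonneg (by nlinarith)
  calc x ^ j * mlP n0 (α * j) = (x ^ j / ((n0 : ℝ) ^ α) ^ j) * mlQ n0 (α * j) := by
        rw [mlP, hrw]; ring
    _ = (x / (n0 : ℝ) ^ α) ^ j * mlQ n0 (α * j) := by rw [div_pow]
    _ ≤ (x / (n0 : ℝ) ^ α) ^ j * (1 + (j:ℝ)) ^ n0 := by
        exact mul_le_mul_of_nonneg_left hQle (by positivity)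

include hα0 hα1 in
lemma ml_scalar_summable {x : ℝ} (hx : 0 ≤ x) :
    Summable (fun k : ℕ => x ^ k / Real.Gamma (α * k + 1)) := by
  obtain ⟨n0, hn0, hxn⟩ := ml_exists_n0 hα0 x
  have hc : (0:ℝ) < (n0 : ℝ) ^ α := lt_of_le_of_lt hx hxn
  have hsum : Summable (fun j : ℕ => (x / (n0:ℝ) ^ α) ^ j * (1 + (j : ℝ)) ^ n0) :=
    ml_summable_aux (div_nonneg hx hc.le) ((div_lt_one hc).mpr hxn) n0
  refine hsum.of_nonneg_of_le (fun k => ?_) (fun k => ?_)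
  · have hΓ : 0 < Real.Gamma (α * k + 1) :=
      Real.Gamma_pos_of_pos (by positivity)
    positivity
  · have hβ : 0 ≤ α * (k:ℝ) := by positivity
    calc x ^ k / Real.Gamma (α * k + 1) = x ^ k * (1 / Real.Gamma (α * k + 1)) := by ring
      _ ≤ x ^ k * mlP n0 (α * k) := by
          refine mul_le_mul_of_nonneg_left (one_div_Gamma_le_mlP hβ hn0) (by positivity)
      _ ≤ _ := ml_term_bound hα0 hα1 hx hn0 hxn k

include hα0 hα1 in
/-- The key scalar fact: the Mittag-Leffler function `E_α(-x)` is nonnegative for `x ≥ 0`. -/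
lemma mlPos {x : ℝ} (hx : 0 ≤ x) :
    0 ≤ ∑' j : ℕ, (-x) ^ j / Real.Gamma (α * j + 1) := by
  obtain ⟨n0, hn0, hxn⟩ := ml_exists_n0 hα0 x
  have hc : (0:ℝ) < (n0 : ℝ) ^ α := lt_of_le_of_lt hx hxn
  set F : ℕ → ℕ → ℝ := fun n j => (-x) ^ j * mlP n (α * j) with hF
  set g : ℕ → ℝ := fun j => (x / (n0:ℝ) ^ α) ^ j * (1 + (j : ℝ)) ^ n0 with hg
  have hgsum : Summable g :=
    ml_summable_aux (div_nonneg hx hc.le) ((div_lt_one hc).mpr hxn) n0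
  have hab : ∀ j : ℕ, Tendsto (fun n => F n j) atTop
      (𝓝 ((-x) ^ j * (1 / Real.Gamma (α * j + 1)))) := by
    intro j
    exact (mlP_tendsto (by positivity)).const_mul _
  have hbound : ∀ᶠ n in atTop, ∀ j : ℕ, ‖F n j‖ ≤ g j := by
    filter_upwards [eventually_ge_atTop n0] with n hn j
    have hβ : 0 ≤ α * (j:ℝ) := by positivity
    have h1 : ‖F n j‖ = x ^ j * mlP n (α * j) := by
      rw [hF, norm_mul, norm_pow, norm_neg, Real.norm_eq_abs, abs_of_nonneg hx,
        Real.norm_eq_abs, abs_of_nonneg (mlP_nonneg hβ)]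
    rw [h1]
    calc x ^ j * mlP n (α * j) ≤ x ^ j * mlP n0 (α * j) := by
          exact mul_le_mul_of_nonneg_left (mlP_anti hβ hn0 hn) (by positivity)
      _ ≤ g j := ml_term_bound hα0 hα1 hx hn0 hxn j
  have hTend : Tendsto (fun n => ∑' j : ℕ, F n j) atTop
      (𝓝 (∑' j : ℕ, (-x) ^ j * (1 / Real.Gamma (α * j + 1)))) :=
    tendsto_tsum_of_dominated_convergence hgsum hab hbound
  have hnonneg : ∀ᶠ n in atTop, 0 ≤ ∑' j : ℕ, F n j := by
    filter_upwards [eventually_ge_atTop n0, eventually_ge_atTop 1] with n hn hn1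
    have hnn : (0:ℝ) < (n:ℝ) := by exact_mod_cast hn1
    have hmono : ((n0:ℝ)) ^ α ≤ ((n:ℝ)) ^ α :=
      Real.rpow_le_rpow (Nat.cast_nonneg n0) (by exact_mod_cast hn) hα0.le
    have hxn' : x < ((n:ℝ)) ^ α := lt_of_lt_of_le hxn hmono
    have hcn : (0:ℝ) < ((n:ℝ)) ^ α := lt_of_le_of_lt hx hxn'
    have hW := mlW_nonneg hα0 hα1 (div_nonneg hx hcn.le) ((div_lt_one hcn).mpr hxn') n
    have heq : ∀ j : ℕ, (-(x / ((n:ℝ)) ^ α)) ^ j * mlQ n (α * j) = F n j := by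
      intro j
      have hrw : ((n : ℝ)) ^ (α * (j:ℝ)) = ((n : ℝ) ^ α) ^ j := by
        rw [Real.rpow_mul hnn.le, Real.rpow_natCast]
      simp only [hF, mlP]
      rw [hrw, ← neg_div, div_pow]
      ring
    rw [tsum_congr heq] at hW
    exact hW
  have : 0 ≤ ∑' j : ℕ, (-x) ^ j * (1 / Real.Gamma (α * j + 1)) :=
    ge_of_tendsto hTend hnonneg
  refine le_of_le_of_eq this (tsum_congr fun j => ?_)
  ring

end scalar

section matrixpart
variable {N : ℕ}

lemma unitary_conj_pow (U : Matrix (Fin N) (Fin N) ℝ) (hU : star U * U = 1)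
    (d : Fin N → ℝ) (hU' : U * star U = 1) (k : ℕ) :
    (U * Matrix.diagonal d * star U) ^ k = U * Matrix.diagonal (fun m => d m ^ k) * star U := by
  induction k with
  | zero =>
      simp only [pow_zero, Matrix.diagonal_one, mul_one, hU']
  | succ k ih =>
      rw [pow_succ, ih]
      have h1 : star U * (U * (Matrix.diagonal d * star U)) = Matrix.diagonal d * star U := by
        rw [← mul_assoc, hU, one_mul]
      simp only [mul_assoc]
      rw [h1, ← mul_assoc (Matrix.diagonal fun m => d m ^ k) (Matrix.diagonal d) (star U),
        Matrix.diagonal_mul_diagonal,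
        show (fun m => d m ^ k * d m) = fun m => d m ^ (k + 1) from
          funext fun m => (pow_succ (d m) k).symm]

/-- The Mittag-Leffler matrix of `-s • L` (with `L` PSD, `s ≥ 0`) has a spectral
representation with non-negative weights. -/
lemma mittagLefflerMatrix_spectral {α : ℝ} (hα0 : 0 < α) (hα1 : α < 1)
    (L : Matrix (Fin N) (Fin N) ℝ) (hL : L.PosSemidef) (s : ℝ) (hs : 0 ≤ s) :
    ∃ (u : Fin N → Fin N → ℝ) (e : Fin N → ℝ), (∀ m, 0 ≤ e m) ∧
      ∀ i j, mittagLefflerMatrix α ((-s) • L) i j = ∑ m, u i m * u j m * e m := by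
  have hH : L.IsHermitian := hL.1
  set U : Matrix (Fin N) (Fin N) ℝ := (hH.eigenvectorUnitary : Matrix (Fin N) (Fin N) ℝ) with hUdef
  have hU : star U * U = 1 := (Matrix.mem_unitaryGroup_iff').mp hH.eigenvectorUnitary.2
  have hU' : U * star U = 1 := (Matrix.mem_unitaryGroup_iff).mp hH.eigenvectorUnitary.2
  set lam : Fin N → ℝ := hH.eigenvalues with hlam
  have hlam0 : ∀ m, 0 ≤ lam m := fun m => hL.eigenvalues_nonneg m
  set d : Fin N → ℝ := fun m => -(s * lam m) with hd
  have hspec : (-s) • L = U * Matrix.diagonal d * star U := by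
    have h0 : L = U * Matrix.diagonal lam * star U := by
      have := hH.spectral_theorem
      simpa using this
    have harg : ((-s) • lam) = d := by
      funext m
      simp only [Pi.smul_apply, smul_eq_mul, hd]
      ring
    rw [h0, ← smul_mul_assoc, ← mul_smul_comm, ← Matrix.diagonal_smul, harg]
  set e : Fin N → ℝ := fun m => ∑' k : ℕ, (d m) ^ k / Real.Gamma (α * k + 1) with he
  have hsummable : ∀ m, Summable (fun k : ℕ => (d m) ^ k / Real.Gamma (α * k + 1)) := by
    intro m
    refine Summable.of_norm ?_
    have := ml_scalar_summable hα0 hα1 (x := s * lam m) (mul_nonneg hs (hlam0 m))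
    refine this.congr fun k => ?_
    rw [norm_div, norm_pow, Real.norm_eq_abs, Real.norm_eq_abs, abs_of_nonneg
      (Real.Gamma_pos_of_pos (by positivity)).le, hd]
    rw [abs_neg, abs_of_nonneg (mul_nonneg hs (hlam0 m))]
  have hepos : ∀ m, 0 ≤ e m := by
    intro m
    have := mlPos hα0 hα1 (x := s * lam m) (mul_nonneg hs (hlam0 m))
    rw [he]
    simpa [hd] using this
  refine ⟨fun i m => U i m, e, hepos, fun i j => ?_⟩
  have hpow : ∀ k : ℕ, (((-s) • L) ^ k) i j = ∑ m, U i m * U j m * (d m) ^ k := by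
    intro k
    rw [hspec, unitary_conj_pow U hU d hU' k, Matrix.mul_apply]
    refine Finset.sum_congr rfl fun m _ => ?_
    rw [Matrix.mul_apply, Finset.sum_eq_single m]
    · rw [Matrix.diagonal_apply_eq, Matrix.star_apply, star_trivial]
      ring
    · intro b _ hb
      rw [Matrix.diagonal_apply_ne _ hb, mul_zero]
    · intro h
      exact absurd (Finset.mem_univ m) h
  calc mittagLefflerMatrix α ((-s) • L) i j
      = ∑' k : ℕ, (∑ m, U i m * U j m * (d m) ^ k) / Real.Gamma (α * k + 1) := by
        rw [mittagLefflerMatrix]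
        simp only [Matrix.of_apply]
        exact tsum_congr fun k => by rw [hpow k]
    _ = ∑' k : ℕ, ∑ m, (U i m * U j m) * ((d m) ^ k / Real.Gamma (α * k + 1)) := by
        refine tsum_congr fun k => ?_
        rw [Finset.sum_div]
        exact Finset.sum_congr rfl fun m _ => by ring
    _ = ∑ m, ∑' k : ℕ, (U i m * U j m) * ((d m) ^ k / Real.Gamma (α * k + 1)) :=
        Summable.tsum_finsetSum fun m _ => (hsummable m).mul_left _
    _ = ∑ m, U i m * U j m * e m := by
        refine Finset.sum_congr rfl fun m _ => ?_
        rw [tsum_mul_left, he]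

end matrixpart

/-- The subdiffusive distance is nonnegative and is a squared Euclidean distance: there is an
embedding `x : V → ℝⁿ` with `𝒟_{α,t}(v,w) = ‖x(v) − x(w)‖₂²`. -/
theorem subdiffDist_nonneg_and_euclidean_embedding
    (n : ℕ) (G : SimpleGraph (Fin n)) [DecidableRel G.Adj]
    (α : ℝ) (hα0 : 0 < α) (hα1 : α < 1) (t : ℝ) (ht : 0 ≤ t) :
    (∀ v w : Fin n, 0 ≤ subdiffDist G α t v w) ∧
    ∃ x : Fin n → EuclideanSpace ℝ (Fin n),
      ∀ v w : Fin n, subdiffDist G α t v w = ‖x v - x w‖ ^ 2 := by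
  obtain ⟨u, e, he, hentry⟩ := mittagLefflerMatrix_spectral hα0 hα1 (G.lapMatrix ℝ)
    (SimpleGraph.posSemidef_lapMatrix (R := ℝ) (G := G)) (t ^ α) (Real.rpow_nonneg ht α)
  have hdist : ∀ v w : Fin n, subdiffDist G α t v w = ∑ m, e m * (u v m - u w m) ^ 2 := by
    intro v w
    rw [subdiffDist, hentry v v, hentry w w, hentry v w, Finset.mul_sum,
      ← Finset.sum_add_distrib, ← Finset.sum_sub_distrib]
    exact Finset.sum_congr rfl fun m _ => by ring
  constructor
  · intro v w
    rw [hdist v w]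
    exact Finset.sum_nonneg fun m _ => mul_nonneg (he m) (sq_nonneg _)
  · set X : Fin n → EuclideanSpace ℝ (Fin n) :=
      fun v => (WithLp.equiv 2 (Fin n → ℝ)).symm (fun m => u v m * Real.sqrt (e m)) with hX
    refine ⟨X, fun v w => ?_⟩
    rw [hdist v w]
    have hsub : ∀ m : Fin n, (X v - X w) m = u v m * Real.sqrt (e m) - u w m * Real.sqrt (e m) := by
      intro m
      simp [hX, WithLp.equiv_symm_apply]
    have hnorm : ‖X v - X w‖ ^ 2
        = ∑ m, (u v m * Real.sqrt (e m) - u w m * Real.sqrt (e m)) ^ 2 := by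
      rw [EuclideanSpace.norm_eq,
        Real.sq_sqrt (Finset.sum_nonneg fun m _ => by positivity)]
      refine Finset.sum_congr rfl fun m _ => ?_
      rw [hsub m, Real.norm_eq_abs, sq_abs]
    rw [hnorm]
    refine Finset.sum_congr rfl fun m _ => ?_
    rw [show u v m * Real.sqrt (e m) - u w m * Real.sqrt (e m)
        = Real.sqrt (e m) * (u v m - u w m) by ring, mul_pow, Real.sq_sqrt (he m)]
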